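/- Let R = k[[x₁,…,x_m, u₁,…,u_m]] and let φ₁,…,φ_n ∈ k[[x]]. Suppose G ∈ k[[v₁,…,v_n]] satisfies G(φ(x+u)) = 0 in k[[x,u]] (composition with the series φ_i(x+u) − φ_i(0), assuming φ_i(0)=0). Then G(φ(x+u) − φ(x)) belongs to the ideal of k[[x,u]] generated by φ₁(x),…,φ_n(x). -/

import Mathlib

set_option linter.unusedSectionVars false
set_option maxHeartbeats 1000000


open MvPowerSeries Classical

section W
section
variable {K : Type*} [Field K] {σ : Type*} [Fintype σ] [DecidableEq σ]

def sdeg (w : σ → ℕ) (d : σ →₀ ℕ) : ℕ := ∑ j, w j * d j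

lemma sdeg_add (w : σ → ℕ) (d₁ d₂ : σ →₀ ℕ) :
    sdeg w (d₁ + d₂) = sdeg w d₁ + sdeg w d₂ := by
  simp [sdeg, mul_add, Finset.sum_add_distrib]

def Wolb (w : σ → ℕ) (r : ℕ) (F : MvPowerSeries σ K) : Prop :=
  ∀ d, sdeg w d < r → MvPowerSeries.coeff d F = 0

lemma wolb_mono {w : σ → ℕ} {r r' : ℕ} {F : MvPowerSeries σ K} (h : Wolb w r F)
    (hr : r' ≤ r) : Wolb w r' F := fun d hd => h d (lt_of_lt_of_le hd hr)

lemma wolb_zero (w : σ → ℕ) (r : ℕ) : Wolb w r (0 : MvPowerSeries σ K) := by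
  intro d _; simp

lemma wolb_one (w : σ → ℕ) : Wolb w 0 (1 : MvPowerSeries σ K) := fun d hd => absurd hd (by simp)

lemma wolb_add {w : σ → ℕ} {r : ℕ} {F G : MvPowerSeries σ K} (hF : Wolb w r F)
    (hG : Wolb w r G) : Wolb w r (F + G) := by
  intro d hd; simp [map_add, hF d hd, hG d hd]

lemma wolb_sub {w : σ → ℕ} {r : ℕ} {F G : MvPowerSeries σ K} (hF : Wolb w r F)
    (hG : Wolb w r G) : Wolb w r (F - G) := by
  intro d hd; simp [map_sub, hF d hd, hG d hd]

lemma wolb_mul {w : σ → ℕ} {r s : ℕ} {F G : MvPowerSeries σ K} (hF : Wolb w r F)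
    (hG : Wolb w s G) : Wolb w (r + s) (F * G) := by
  intro d hd
  rw [MvPowerSeries.coeff_mul]
  apply Finset.sum_eq_zero
  rintro ⟨d₁, d₂⟩ hp
  rw [Finset.HasAntidiagonal.mem_antidiagonal] at hp
  have : sdeg w d₁ + sdeg w d₂ < r + s := by rw [← sdeg_add, hp]; exact hd
  rcases lt_or_ge (sdeg w d₁) r with h | h
  · simp [hF d₁ h]
  · have : sdeg w d₂ < s := by omega
    simp [hG d₂ this]

lemma wolb_pow {w : σ → ℕ} {F : MvPowerSeries σ K} (hF : Wolb w 1 F) (k : ℕ) :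
    Wolb w k (F ^ k) := by
  induction k with
  | zero => simpa using wolb_one w
  | succ k ih => rw [pow_succ]; exact wolb_mul ih hF

lemma wolb_prod_pow {ι : Type*} [Fintype ι] {w : σ → ℕ} {ψ : ι → MvPowerSeries σ K}
    (hψ : ∀ i, Wolb w 1 (ψ i)) (γ : ι →₀ ℕ) :
    Wolb w (∑ i, γ i) (∏ i, ψ i ^ γ i) := by
  classical
  have key : ∀ s : Finset ι, Wolb w (∑ i ∈ s, γ i) (∏ i ∈ s, ψ i ^ γ i) := by
    intro s
    induction s using Finset.induction with
    | empty => simpa using wolb_one w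
    | insert _ _ hx ih =>
      rw [Finset.sum_insert hx, Finset.prod_insert hx]
      exact wolb_mul (wolb_pow (hψ _) _) ih
  exact key Finset.univ

/-- Telescoping: difference of two monomial products is a combination of the
differences, with coefficients of order `≥ |γ| - 1`. -/
lemma tel {n : ℕ} (p q : Fin n → MvPowerSeries σ K)
    (hp : ∀ i, Wolb (fun _ => 1) 1 (p i)) (hq : ∀ i, Wolb (fun _ => 1) 1 (q i))
    (γ : Fin n →₀ ℕ) :
    ∃ h : Fin n → MvPowerSeries σ K,
      (∀ i, Wolb (fun _ => 1) ((∑ j, γ j) - 1) (h i)) ∧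
        ∏ i, p i ^ γ i - ∏ i, q i ^ γ i = ∑ i, (p i - q i) * h i := by
  classical
  suffices key : ∀ N : ℕ, ∀ γ : Fin n →₀ ℕ, (∑ j, γ j) = N →
      ∃ h : Fin n → MvPowerSeries σ K,
        (∀ i, Wolb (fun _ => 1) (N - 1) (h i)) ∧
          ∏ i, p i ^ γ i - ∏ i, q i ^ γ i = ∑ i, (p i - q i) * h i by
    obtain ⟨h, hw, he⟩ := key (∑ j, γ j) γ rfl
    exact ⟨h, hw, he⟩
  intro N
  induction N using Nat.strong_induction_on with
  | _ N ih =>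
    intro γ hγN
    rcases Nat.eq_zero_or_pos N with hN0 | hNpos
    · subst hN0
      have hγ0 : γ = 0 := by
        ext j
        have := Finset.sum_eq_zero_iff.mp hγN j (Finset.mem_univ j)
        simpa using this
      refine ⟨fun _ => 0, fun i => wolb_zero _ _, ?_⟩
      simp [hγ0]
    · -- pick j in the support
      have hne : γ ≠ 0 := by
        intro h0
        rw [h0] at hγN
        simp at hγN
        omega
      obtain ⟨j, hj⟩ := Finsupp.support_nonempty_iff.mpr hne
      have hjpos : 0 < γ j := Nat.pos_of_ne_zero (Finsupp.mem_support_iff.mp hj)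
      set γ' : Fin n →₀ ℕ := γ - Finsupp.single j 1 with hγ'def
      have hγ'add : γ' + Finsupp.single j 1 = γ := by
        ext i
        by_cases hij : i = j
        · subst hij
          simp [hγ'def, Finsupp.single_apply]
          omega
        · simp [hγ'def, Finsupp.single_apply, Ne.symm hij, hij]
      have hsum' : (∑ j', γ' j') = N - 1 := by
        have h1 : (∑ j', (γ' + Finsupp.single j 1 : Fin n →₀ ℕ) j') = (∑ j', γ' j') + 1 := by
          simp only [Finsupp.add_apply, Finset.sum_add_distrib]
          congr 1
          rw [Finset.sum_eq_single j]
          · simp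
          · intro i _ hij; simp [Finsupp.single_apply, Ne.symm hij]
          · intro h; exact absurd (Finset.mem_univ j) h
        rw [hγ'add, hγN] at h1
        omega
      obtain ⟨h', hw', he'⟩ := ih (N - 1) (by omega) γ' hsum'
      have hprodp : ∏ i, p i ^ γ i = (∏ i, p i ^ γ' i) * p j := by
        have hsplit : (∏ i, p i ^ γ i)
            = ∏ i, (p i ^ γ' i * p i ^ (Finsupp.single j 1 : Fin n →₀ ℕ) i) := by
          refine Finset.prod_congr rfl fun i _ => ?_
          conv_lhs => rw [← hγ'add]
          rw [Finsupp.add_apply, pow_add]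
        rw [hsplit, Finset.prod_mul_distrib]
        congr 1
        rw [Finset.prod_eq_single j]
        · simp
        · intro i _ hij; simp [Finsupp.single_apply, Ne.symm hij]
        · intro h; exact absurd (Finset.mem_univ j) h
      have hprodq : ∏ i, q i ^ γ i = (∏ i, q i ^ γ' i) * q j := by
        have hsplit : (∏ i, q i ^ γ i)
            = ∏ i, (q i ^ γ' i * q i ^ (Finsupp.single j 1 : Fin n →₀ ℕ) i) := by
          refine Finset.prod_congr rfl fun i _ => ?_
          conv_lhs => rw [← hγ'add]
          rw [Finsupp.add_apply, pow_add]
        rw [hsplit, Finset.prod_mul_distrib]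
        congr 1
        rw [Finset.prod_eq_single j]
        · simp
        · intro i _ hij; simp [Finsupp.single_apply, Ne.symm hij]
        · intro h; exact absurd (Finset.mem_univ j) h
      refine ⟨fun i => p j * h' i + if i = j then ∏ i', q i' ^ γ' i' else 0, ?_, ?_⟩
      · intro i
        apply wolb_add
        · apply wolb_mono (wolb_mul (hp j) (hw' i))
          omega
        · by_cases hij : i = j
          · rw [if_pos hij]
            apply wolb_mono (wolb_prod_pow hq γ')
            omega
          · rw [if_neg hij]; exact wolb_zero _ _
      · rw [hprodp, hprodq]
        have e1 : ∑ i, (p i - q i) * (p j * h' i) = p j * ∑ i, (p i - q i) * h' i := by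
          rw [Finset.mul_sum]
          exact Finset.sum_congr rfl fun i _ => by ring
        have e2 : ∑ i, (p i - q i) * (if i = j then ∏ i', q i' ^ γ' i' else 0)
            = (p j - q j) * ∏ i', q i' ^ γ' i' := by
          rw [Finset.sum_eq_single j]
          · rw [if_pos rfl]
          · intro i _ hij; rw [if_neg hij, mul_zero]
          · intro h; exact absurd (Finset.mem_univ j) h
        simp only [mul_add]
        rw [Finset.sum_add_distrib, e1, e2, ← he']
        ring
end

end W

noncomputable section

/-- The series `F(x + u) ∈ k[[x, u]]` obtained from `F ∈ k[[x]]` by the substitution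
`x_i ↦ x_i + u_i`: its coefficient on `x^a u^b` is `(∏ i, C(a_i + b_i, b_i)) · F_{a+b}`
(the `x`-variables are indexed by `Sum.inl`, the `u`-variables by `Sum.inr`). -/
def shiftAdd {K : Type*} [Field K] {m : ℕ} (F : MvPowerSeries (Fin m) K) :
    MvPowerSeries (Fin m ⊕ Fin m) K :=
  fun e =>
    (∏ i : Fin m, Nat.choose (e (Sum.inl i) + e (Sum.inr i)) (e (Sum.inr i))) •
      F (Finsupp.equivFunOnFinite.symm fun i => e (Sum.inl i) + e (Sum.inr i))

/-- The series `F(x) ∈ k[[x, u]]` obtained from `F ∈ k[[x]]` by regarding it as a series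
in the `x`-variables only. -/
def onX {K : Type*} [Field K] {m : ℕ} (F : MvPowerSeries (Fin m) K) :
    MvPowerSeries (Fin m ⊕ Fin m) K :=
  fun e =>
    if ∀ i : Fin m, e (Sum.inr i) = 0 then
      F (Finsupp.equivFunOnFinite.symm fun i => e (Sum.inl i))
    else 0

/-- Composition `G(ψ₁, …, ψ_n)` of a formal power series `G ∈ k[[v₁,…,v_n]]` with power
series `ψ_i` having zero constant term: the coefficient of `G ∘ ψ` on a monomial of total
degree `N` only involves the terms `G_γ ψ^γ` with each `γ_i ≤ N`, so it is given by the
corresponding finite sum. -/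
def compPS {K : Type*} [Field K] {n : ℕ} {σ : Type*} [Fintype σ] [DecidableEq σ]
    (G : MvPowerSeries (Fin n) K) (ψ : Fin n → MvPowerSeries σ K) :
    MvPowerSeries σ K :=
  fun d =>
    MvPowerSeries.coeff d
      (∑ γ ∈ Finset.Iic (Finsupp.equivFunOnFinite.symm fun _ : Fin n => (∑ j, d j : ℕ)),
        MvPowerSeries.coeff γ G • ∏ i : Fin n, ψ i ^ γ i)

end


noncomputable section Aux
open Finsupp
variable {K : Type*} [Field K] {m n : ℕ}

def jn (a b : Fin m →₀ ℕ) : (Fin m ⊕ Fin m) →₀ ℕ :=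
  Finsupp.equivFunOnFinite.symm (Sum.elim a b)

@[simp] lemma jn_inl (a b : Fin m →₀ ℕ) (i : Fin m) : jn a b (Sum.inl i) = a i := rfl
@[simp] lemma jn_inr (a b : Fin m →₀ ℕ) (i : Fin m) : jn a b (Sum.inr i) = b i := rfl

def dL (d : (Fin m ⊕ Fin m) →₀ ℕ) : Fin m →₀ ℕ :=
  Finsupp.equivFunOnFinite.symm fun i => d (Sum.inl i)

def dR (d : (Fin m ⊕ Fin m) →₀ ℕ) : Fin m →₀ ℕ :=
  Finsupp.equivFunOnFinite.symm fun i => d (Sum.inr i)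

@[simp] lemma dL_apply (d : (Fin m ⊕ Fin m) →₀ ℕ) (i : Fin m) : dL d i = d (Sum.inl i) := rfl
@[simp] lemma dR_apply (d : (Fin m ⊕ Fin m) →₀ ℕ) (i : Fin m) : dR d i = d (Sum.inr i) := rfl

lemma jn_dL_dR (d : (Fin m ⊕ Fin m) →₀ ℕ) : jn (dL d) (dR d) = d := by
  ext j; cases j <;> rfl

@[simp] lemma dL_jn (a b : Fin m →₀ ℕ) : dL (jn a b) = a := by ext i; rfl
@[simp] lemma dR_jn (a b : Fin m →₀ ℕ) : dR (jn a b) = b := by ext i; rfl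

lemma jn_add (a₁ a₂ b₁ b₂ : Fin m →₀ ℕ) :
    jn (a₁ + a₂) (b₁ + b₂) = jn a₁ b₁ + jn a₂ b₂ := by
  ext j; cases j <;> simp

lemma dL_add (d e : (Fin m ⊕ Fin m) →₀ ℕ) : dL (d + e) = dL d + dL e := by ext i; simp

def Eb (b : Fin m →₀ ℕ) : MvPowerSeries (Fin m ⊕ Fin m) K →ₗ[K] MvPowerSeries (Fin m) K where
  toFun F := fun a => F (jn a b)
  map_add' _ _ := rfl
  map_smul' _ _ := rfl

lemma coeff_Eb (b : Fin m →₀ ℕ) (F : MvPowerSeries (Fin m ⊕ Fin m) K) (a : Fin m →₀ ℕ) :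
    MvPowerSeries.coeff a (Eb b F) = MvPowerSeries.coeff (jn a b) F := rfl

lemma Eb_onX_mul (b : Fin m →₀ ℕ) (g : MvPowerSeries (Fin m) K)
    (F : MvPowerSeries (Fin m ⊕ Fin m) K) :
    Eb b (onX g * F) = g * Eb b F := by
  apply MvPowerSeries.ext
  intro a
  rw [coeff_Eb, MvPowerSeries.coeff_mul, MvPowerSeries.coeff_mul]
  have hsplit : ∀ p : ((Fin m ⊕ Fin m) →₀ ℕ) × ((Fin m ⊕ Fin m) →₀ ℕ),
      MvPowerSeries.coeff p.1 (onX g) * MvPowerSeries.coeff p.2 F =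
        if (∀ i : Fin m, p.1 (Sum.inr i) = 0) then
          MvPowerSeries.coeff (dL p.1) g * MvPowerSeries.coeff p.2 F else 0 := by
    rintro ⟨p₁, p₂⟩
    by_cases h : ∀ i : Fin m, p₁ (Sum.inr i) = 0
    · rw [if_pos h]
      congr 1
      show onX g p₁ = _
      rw [onX, if_pos h]; rfl
    · rw [if_neg h]
      have h0 : onX g p₁ = 0 := by rw [onX, if_neg h]
      show onX g p₁ * _ = 0
      rw [h0, zero_mul]
  rw [Finset.sum_congr rfl fun p _ => hsplit p, ← Finset.sum_filter]
  refine Finset.sum_nbij' (fun p => ((dL p.1 : Fin m →₀ ℕ), (dL p.2 : Fin m →₀ ℕ)))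
    (fun q => (jn q.1 0, jn q.2 b)) ?_ ?_ ?_ ?_ ?_
  · rintro ⟨p₁, p₂⟩ hp
    simp only [Finset.mem_filter, Finset.HasAntidiagonal.mem_antidiagonal] at hp
    obtain ⟨hadd, hz⟩ := hp
    rw [Finset.HasAntidiagonal.mem_antidiagonal]
    have := congrArg dL hadd
    rw [dL_add] at this
    simpa [dL_jn] using this
  · rintro ⟨q₁, q₂⟩ hq
    rw [Finset.HasAntidiagonal.mem_antidiagonal] at hq
    simp only [Finset.mem_filter, Finset.HasAntidiagonal.mem_antidiagonal]
    constructor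
    · rw [← jn_add, hq, zero_add]
    · intro i; simp
  · rintro ⟨p₁, p₂⟩ hp
    simp only [Finset.mem_filter, Finset.HasAntidiagonal.mem_antidiagonal] at hp
    obtain ⟨hadd, hz⟩ := hp
    have h2 : ∀ i, p₂ (Sum.inr i) = b i := by
      intro i
      have := congrArg (fun d => d (Sum.inr i)) hadd
      simp only [Finsupp.add_apply, jn_inr] at this
      rw [hz i, zero_add] at this; exact this
    have e1 : jn (dL p₁) 0 = p₁ := by ext j; cases j <;> simp [hz]
    have e2 : jn (dL p₂) b = p₂ := by ext j; cases j <;> simp [h2]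
    simp [e1, e2]
  · rintro ⟨q₁, q₂⟩ _
    simp [dL_jn]
  · rintro ⟨p₁, p₂⟩ hp
    simp only [Finset.mem_filter, Finset.HasAntidiagonal.mem_antidiagonal] at hp
    obtain ⟨hadd, hz⟩ := hp
    have h2 : ∀ i, p₂ (Sum.inr i) = b i := by
      intro i
      have := congrArg (fun d => d (Sum.inr i)) hadd
      simp only [Finsupp.add_apply, jn_inr] at this
      rw [hz i, zero_add] at this; exact this
    have hp2 : jn (dL p₂) b = p₂ := by ext j; cases j <;> simp [h2]
    show _ = _ * MvPowerSeries.coeff (dL p₂) (Eb b F)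
    rw [coeff_Eb, hp2]

lemma Eb_crit {n : ℕ} (φ : Fin n → MvPowerSeries (Fin m) K)
    (F : MvPowerSeries (Fin m ⊕ Fin m) K)
    (h : ∀ b, Eb b F ∈ Ideal.span (Set.range φ)) :
    F ∈ Ideal.span (Set.range fun i => onX (φ i)) := by
  rw [Ideal.mem_span_range_iff_exists_fun]
  have h' : ∀ b, ∃ c : Fin n → MvPowerSeries (Fin m) K,
      ∑ i, c i * φ i = Eb b F := by
    intro b; rw [← Ideal.mem_span_range_iff_exists_fun]; exact h b
  choose c hc using h'
  set g : Fin n → MvPowerSeries (Fin m ⊕ Fin m) K :=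
    fun i => fun e => c (dR e) i (dL e) with hg
  refine ⟨g, ?_⟩
  apply MvPowerSeries.ext
  intro e
  have hEg : ∀ i, Eb (dR e) (g i) = c (dR e) i := by
    intro i
    apply MvPowerSeries.ext
    intro a
    rw [coeff_Eb]
    show c (dR (jn a (dR e))) i (dL (jn a (dR e))) = _
    rw [dR_jn, dL_jn]; rfl
  calc MvPowerSeries.coeff e (∑ i, g i * onX (φ i))
      = MvPowerSeries.coeff (dL e) (Eb (dR e) (∑ i, g i * onX (φ i))) := by
        rw [coeff_Eb, jn_dL_dR]
    _ = MvPowerSeries.coeff (dL e) (∑ i, φ i * c (dR e) i) := by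
        rw [map_sum]
        congr 1
        refine Finset.sum_congr rfl fun i _ => ?_
        rw [mul_comm (g i) (onX (φ i)), Eb_onX_mul, hEg]
    _ = MvPowerSeries.coeff (dL e) (Eb (dR e) F) := by
        rw [show (∑ i, φ i * c (dR e) i) = ∑ i, c (dR e) i * φ i from
          Finset.sum_congr rfl fun i _ => mul_comm _ _, hc]
    _ = MvPowerSeries.coeff e F := by rw [coeff_Eb, jn_dL_dR]


/-- build a power series from a coefficient function -/
def mkPS (f : (Fin m →₀ ℕ) → K) : MvPowerSeries (Fin m) K := f

lemma coeff_mkPS (f : (Fin m →₀ ℕ) → K) (d : Fin m →₀ ℕ) :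
    MvPowerSeries.coeff d (mkPS f) = f d := rfl

/-- constant exponent vector -/
def cst (n M : ℕ) : Fin n →₀ ℕ := Finsupp.equivFunOnFinite.symm fun _ => M

@[simp] lemma cst_apply (n M : ℕ) (i : Fin n) : cst n M i = M := rfl

lemma cst_le_cst {n M M' : ℕ} (h : M ≤ M') : cst n M ≤ cst n M' := by
  intro i; simpa using h

/-- total-degree weight on the sum type -/
def ow (m : ℕ) : Fin m ⊕ Fin m → ℕ := fun _ => 1

/-- u-degree weight on the sum type -/
def uw (m : ℕ) : Fin m ⊕ Fin m → ℕ := Sum.elim (fun _ => 0) (fun _ => 1)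

lemma sdeg_ow (d : (Fin m ⊕ Fin m) →₀ ℕ) : sdeg (ow m) d = ∑ j, d j := by
  simp [sdeg, ow]

lemma sum_jn (a b : Fin m →₀ ℕ) :
    (∑ j, (jn a b) j) = (∑ j, a j) + ∑ j, b j := by
  rw [Fintype.sum_sum_type]
  simp

lemma sdeg_ow_jn (a b : Fin m →₀ ℕ) :
    sdeg (ow m) (jn a b) = (∑ j, a j) + ∑ j, b j := by
  rw [sdeg_ow, sum_jn]

lemma sdeg_uw_jn (a b : Fin m →₀ ℕ) :
    sdeg (uw m) (jn a b) = ∑ j, b j := by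
  rw [sdeg, Fintype.sum_sum_type]
  simp [uw]

lemma sdeg_uw_zero (d : (Fin m ⊕ Fin m) →₀ ℕ) (h : sdeg (uw m) d = 0) :
    ∀ i, d (Sum.inr i) = 0 := by
  intro i
  rw [sdeg, Fintype.sum_sum_type] at h
  simp only [uw, Sum.elim_inl, Sum.elim_inr, zero_mul, one_mul, Finset.sum_const_zero,
    zero_add] at h
  exact Finset.sum_eq_zero_iff.mp h i (Finset.mem_univ i)

/-- stability of truncated substitution sums -/
lemma stab {σ : Type*} [Fintype σ] [DecidableEq σ] (c : (Fin n →₀ ℕ) → K)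
    (ψ : Fin n → MvPowerSeries σ K) (w : σ → ℕ) (hψ : ∀ i, Wolb w 1 (ψ i))
    (d : σ →₀ ℕ) (B B' : Fin n →₀ ℕ) (hB : ∀ i, sdeg w d ≤ B i) (hBB' : B ≤ B') :
    MvPowerSeries.coeff d (∑ γ ∈ Finset.Iic B', c γ • ∏ i, ψ i ^ γ i)
      = MvPowerSeries.coeff d (∑ γ ∈ Finset.Iic B, c γ • ∏ i, ψ i ^ γ i) := by
  rw [map_sum, map_sum]
  refine (Finset.sum_subset (Finset.Iic_subset_Iic.mpr hBB') ?_).symm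
  intro γ _ hγ
  rw [Finset.mem_Iic] at hγ
  have : ∃ i, B i < γ i := by
    by_contra hcon
    push_neg at hcon
    exact hγ fun i => hcon i
  obtain ⟨i, hi⟩ := this
  have hlt : sdeg w d < ∑ j, γ j := by
    have h1 : γ i ≤ ∑ j, γ j :=
      Finset.single_le_sum (f := fun j => γ j) (fun _ _ => Nat.zero_le _) (Finset.mem_univ i)
    have := hB i
    omega
  rw [map_smul, smul_eq_mul, wolb_prod_pow hψ γ d hlt, mul_zero]

lemma zero_finsupp_eq : (Finsupp.equivFunOnFinite.symm fun _ : Fin m => 0) = 0 := by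
  ext i; rfl

lemma wolb_ow_shiftAdd (φ : MvPowerSeries (Fin m) K)
    (h0 : MvPowerSeries.constantCoeff φ = 0) : Wolb (ow m) 1 (shiftAdd φ) := by
  intro d hd
  have hd0 : d = 0 := by
    rw [sdeg_ow] at hd
    ext j
    have := Finset.sum_eq_zero_iff.mp (by omega : (∑ j, d j) = 0) j (Finset.mem_univ j)
    simpa using this
  subst hd0
  show shiftAdd φ 0 = 0
  rw [shiftAdd]
  simp only [Finsupp.coe_zero, Pi.zero_apply, Nat.choose_zero_right, Finset.prod_const_one,
    add_zero]
  rw [zero_finsupp_eq, one_smul]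
  exact h0

lemma wolb_ow_onX (φ : MvPowerSeries (Fin m) K)
    (h0 : MvPowerSeries.constantCoeff φ = 0) : Wolb (ow m) 1 (onX φ) := by
  intro d hd
  have hd0 : d = 0 := by
    rw [sdeg_ow] at hd
    ext j
    have := Finset.sum_eq_zero_iff.mp (by omega : (∑ j, d j) = 0) j (Finset.mem_univ j)
    simpa using this
  subst hd0
  show onX φ 0 = 0
  have hc : ∀ i : Fin m, (0 : (Fin m ⊕ Fin m) →₀ ℕ) (Sum.inr i) = 0 := fun i => rfl
  rw [onX, if_pos hc]
  simp only [Finsupp.coe_zero, Pi.zero_apply]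
  rw [zero_finsupp_eq]
  exact h0

lemma wolb_uw_sub (φ : MvPowerSeries (Fin m) K) :
    Wolb (uw m) 1 (shiftAdd φ - onX φ) := by
  intro d hd
  have hz : ∀ i, d (Sum.inr i) = 0 := sdeg_uw_zero d (by omega)
  rw [map_sub]
  have h1 : MvPowerSeries.coeff d (shiftAdd φ)
      = φ (Finsupp.equivFunOnFinite.symm fun i => d (Sum.inl i)) := by
    show shiftAdd φ d = _
    rw [shiftAdd]
    have harg : (fun i => d (Sum.inl i) + d (Sum.inr i)) = fun i => d (Sum.inl i) := by
      funext i; rw [hz i, add_zero]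
    rw [show (∏ i, (d (Sum.inl i) + d (Sum.inr i)).choose (d (Sum.inr i))) = 1 by
      refine Finset.prod_eq_one fun i _ => by rw [hz i, Nat.choose_zero_right]]
    rw [harg, one_smul]
  have h2 : MvPowerSeries.coeff d (onX φ)
      = φ (Finsupp.equivFunOnFinite.symm fun i => d (Sum.inl i)) := by
    show onX φ d = _
    rw [onX, if_pos hz]
  rw [h1, h2, sub_self]

end Aux


theorem statement17 {K : Type*} [Field K] {n m : ℕ}
    (φ : Fin n → MvPowerSeries (Fin m) K)
    (hφ0 : ∀ i, MvPowerSeries.constantCoeff (φ i) = 0)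
    (G : MvPowerSeries (Fin n) K)
    (hG : compPS G (fun i => shiftAdd (φ i)) = 0) :
    compPS G (fun i => shiftAdd (φ i) - onX (φ i)) ∈
      Ideal.span (Set.range fun i => onX (φ i)) := by
  classical
  set J : Ideal (MvPowerSeries (Fin m) K) := Ideal.span (Set.range φ) with hJ
  set ψ : Fin n → MvPowerSeries (Fin m ⊕ Fin m) K := fun i => shiftAdd (φ i) with hψdef
  set ψ' : Fin n → MvPowerSeries (Fin m ⊕ Fin m) K :=
    fun i => shiftAdd (φ i) - onX (φ i) with hψ'def
  have hψow : ∀ i, Wolb (ow m) 1 (ψ i) := fun i => wolb_ow_shiftAdd (φ i) (hφ0 i)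
  have hχow : ∀ i, Wolb (ow m) 1 (onX (φ i)) := fun i => wolb_ow_onX (φ i) (hφ0 i)
  have hψ'ow : ∀ i, Wolb (ow m) 1 (ψ' i) := fun i => wolb_sub (hψow i) (hχow i)
  have hψ'uw : ∀ i, Wolb (uw m) 1 (ψ' i) := fun i => wolb_uw_sub (φ i)
  have tel' : ∀ γ : Fin n →₀ ℕ, ∃ h : Fin n → MvPowerSeries (Fin m ⊕ Fin m) K,
      (∀ i, Wolb (ow m) ((∑ j, γ j) - 1) (h i)) ∧
        ∏ i, ψ i ^ γ i - ∏ i, ψ' i ^ γ i = ∑ i, onX (φ i) * h i := by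
    intro γ
    obtain ⟨h, hw, he⟩ := tel ψ ψ' hψow hψ'ow γ
    refine ⟨h, hw, ?_⟩
    rw [he]
    refine Finset.sum_congr rfl fun i _ => ?_
    have : ψ i - ψ' i = onX (φ i) := by rw [hψdef, hψ'def]; simp
    rw [this]
  choose H Hw Heq using tel'
  apply Eb_crit
  intro b
  set Nb := ∑ j, b j with hNbdef
  set S : ℕ → MvPowerSeries (Fin m ⊕ Fin m) K :=
    fun M => ∑ γ ∈ Finset.Iic (cst n M), MvPowerSeries.coeff γ G • ∏ i, ψ i ^ γ i with hSdef
  set T : ℕ → MvPowerSeries (Fin m ⊕ Fin m) K :=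
    fun M => ∑ γ ∈ Finset.Iic (cst n M), MvPowerSeries.coeff γ G • ∏ i, ψ' i ^ γ i with hTdef
  have hcomp' : ∀ d : (Fin m ⊕ Fin m) →₀ ℕ,
      MvPowerSeries.coeff d (compPS G ψ') = MvPowerSeries.coeff d (T (∑ j, d j)) :=
    fun d => rfl
  have hG' : ∀ d : (Fin m ⊕ Fin m) →₀ ℕ, MvPowerSeries.coeff d (S (∑ j, d j)) = 0 := by
    intro d
    have h1 : MvPowerSeries.coeff d (compPS G ψ) = 0 := by rw [hG]; simp
    exact h1
  -- Step A : the u-coefficient extraction of `G(ψ')` only needs the truncation at `|b|`.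
  have stepA : Eb b (compPS G ψ') = Eb b (T Nb) := by
    apply MvPowerSeries.ext
    intro a
    rw [coeff_Eb, coeff_Eb, hcomp' (jn a b), sum_jn]
    exact stab (fun γ => MvPowerSeries.coeff γ G) ψ' (uw m) hψ'uw (jn a b)
      (cst n Nb) (cst n ((∑ j, a j) + Nb))
      (fun i => by rw [sdeg_uw_jn, cst_apply]) (cst_le_cst (by omega))
  -- Step B
  have stepB : Eb b (T Nb) - Eb b (S Nb) ∈ J := by
    rw [← map_sub]
    have hTS : T Nb - S Nb = ∑ γ ∈ Finset.Iic (cst n Nb),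
        MvPowerSeries.coeff γ G • (∏ i, ψ' i ^ γ i - ∏ i, ψ i ^ γ i) := by
      rw [← Finset.sum_sub_distrib]
      exact Finset.sum_congr rfl fun γ _ => (smul_sub _ _ _).symm
    rw [hTS, map_sum]
    apply Ideal.sum_mem
    intro γ _
    rw [map_smul]
    have hmem : Eb b (∏ i, ψ' i ^ γ i - ∏ i, ψ i ^ γ i) ∈ J := by
      have hneg : ∏ i, ψ' i ^ γ i - ∏ i, ψ i ^ γ i
          = -(∏ i, ψ i ^ γ i - ∏ i, ψ' i ^ γ i) := by ring
      rw [hneg, map_neg, Heq γ, map_sum]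
      apply neg_mem
      apply Ideal.sum_mem
      intro i _
      rw [Eb_onX_mul]
      exact Ideal.mul_mem_right _ _ (Ideal.subset_span ⟨i, rfl⟩)
    rw [MvPowerSeries.smul_eq_C_mul]
    exact Ideal.mul_mem_left _ _ hmem
  -- key identity for large γ
  have key : ∀ γ : Fin n →₀ ℕ, ¬ γ ≤ cst n Nb →
      Eb b (∏ i, ψ i ^ γ i) = ∑ i, φ i * Eb b (H γ i) := by
    intro γ hγ
    obtain ⟨i0, hi0⟩ : ∃ i0, Nb < γ i0 := by
      by_contra hcon
      push_neg at hcon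
      exact hγ fun i => by rw [cst_apply]; exact hcon i
    have hz : Eb b (∏ i, ψ' i ^ γ i) = 0 := by
      apply MvPowerSeries.ext
      intro a
      rw [coeff_Eb, map_zero]
      apply wolb_prod_pow hψ'uw γ (jn a b)
      rw [sdeg_uw_jn]
      have : γ i0 ≤ ∑ j, γ j :=
        Finset.single_le_sum (f := fun j => γ j) (fun _ _ => Nat.zero_le _) (Finset.mem_univ i0)
      omega
    have hsplit : Eb b (∏ i, ψ i ^ γ i)
        = Eb b (∏ i, ψ i ^ γ i - ∏ i, ψ' i ^ γ i) + Eb b (∏ i, ψ' i ^ γ i) := by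
      rw [← map_add, sub_add_cancel]
    rw [hsplit, hz, add_zero, Heq γ, map_sum]
    exact Finset.sum_congr rfl fun i _ => Eb_onX_mul b (φ i) (H γ i)
  -- Step C
  have stepC : Eb b (S Nb) ∈ J := by
    have hwit : ∃ c : Fin n → MvPowerSeries (Fin m) K,
        Eb b (S Nb) = -∑ i, φ i * c i := by
      refine ⟨fun i => mkPS (fun a => MvPowerSeries.coeff a
        (∑ γ ∈ Finset.Iic (cst n ((∑ j, a j) + Nb + 1)) \ Finset.Iic (cst n Nb),
          MvPowerSeries.coeff γ G • Eb b (H γ i))), ?_⟩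
      apply MvPowerSeries.ext
      intro a
      set A := ∑ j, a j with hAdef
      set DD : Finset (Fin n →₀ ℕ) :=
        Finset.Iic (cst n (A + Nb + 1)) \ Finset.Iic (cst n Nb) with hDDdef
      set W : Fin n → MvPowerSeries (Fin m) K :=
        fun i => ∑ γ ∈ DD, MvPowerSeries.coeff γ G • Eb b (H γ i) with hWdef
      have hstab : ∀ (i : Fin n) (q2 : Fin m →₀ ℕ), (∑ j, q2 j) ≤ A →
          MvPowerSeries.coeff q2
            (mkPS (fun a' => MvPowerSeries.coeff a'
              (∑ γ ∈ Finset.Iic (cst n ((∑ j, a' j) + Nb + 1)) \ Finset.Iic (cst n Nb),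
                MvPowerSeries.coeff γ G • Eb b (H γ i))))
            = MvPowerSeries.coeff q2 (W i) := by
        intro i q2 hq2
        have h1 : MvPowerSeries.coeff q2
            (mkPS (fun a' => MvPowerSeries.coeff a'
              (∑ γ ∈ Finset.Iic (cst n ((∑ j, a' j) + Nb + 1)) \ Finset.Iic (cst n Nb),
                MvPowerSeries.coeff γ G • Eb b (H γ i))))
            = MvPowerSeries.coeff q2
              (∑ γ ∈ Finset.Iic (cst n ((∑ j, q2 j) + Nb + 1)) \ Finset.Iic (cst n Nb),
                MvPowerSeries.coeff γ G • Eb b (H γ i)) := rfl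
        rw [h1, hWdef, map_sum, map_sum]
        apply Finset.sum_subset
        · rw [hDDdef]
          exact Finset.sdiff_subset_sdiff
            (Finset.Iic_subset_Iic.mpr (cst_le_cst (by omega))) subset_rfl
        · intro γ hγ hnγ
          have hγ1 : γ ∉ Finset.Iic (cst n Nb) := by
            rw [hDDdef] at hγ
            exact (Finset.mem_sdiff.mp hγ).2
          have hγ2 : ¬ γ ≤ cst n ((∑ j, q2 j) + Nb + 1) := by
            intro hle
            exact hnγ (Finset.mem_sdiff.mpr ⟨Finset.mem_Iic.mpr hle, hγ1⟩)
          obtain ⟨i0, hi0⟩ : ∃ i0, (∑ j, q2 j) + Nb + 1 < γ i0 := by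
            by_contra hcon
            push_neg at hcon
            exact hγ2 fun i' => by rw [cst_apply]; exact hcon i'
          have hγsum : γ i0 ≤ ∑ j, γ j :=
            Finset.single_le_sum (f := fun j => γ j) (fun _ _ => Nat.zero_le _)
              (Finset.mem_univ i0)
          rw [map_smul, smul_eq_mul, coeff_Eb, Hw γ i (jn q2 b), mul_zero]
          rw [sdeg_ow_jn]
          omega
      have e1 : ∀ i : Fin n, MvPowerSeries.coeff a
          (φ i * mkPS (fun a' => MvPowerSeries.coeff a'
            (∑ γ ∈ Finset.Iic (cst n ((∑ j, a' j) + Nb + 1)) \ Finset.Iic (cst n Nb),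
              MvPowerSeries.coeff γ G • Eb b (H γ i))))
          = MvPowerSeries.coeff a (φ i * W i) := by
        intro i
        rw [MvPowerSeries.coeff_mul, MvPowerSeries.coeff_mul]
        refine Finset.sum_congr rfl ?_
        rintro ⟨q1, q2⟩ hq
        rw [Finset.HasAntidiagonal.mem_antidiagonal] at hq
        have hle : (∑ j, q2 j) ≤ A := by
          have hsum : (∑ j, (q1 + q2) j) = (∑ j, q1 j) + ∑ j, q2 j := by
            simp [Finset.sum_add_distrib]
          rw [hq] at hsum
          rw [hAdef]
          omega
        rw [hstab i q2 hle]
      have e2 : (∑ i, φ i * W i) = Eb b (S (A + Nb + 1)) - Eb b (S Nb) := by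
        have swap : (∑ i, φ i * W i)
            = ∑ γ ∈ DD, MvPowerSeries.coeff γ G • ∑ i, φ i * Eb b (H γ i) := by
          rw [hWdef]
          rw [show (∑ i, φ i * ∑ γ ∈ DD, MvPowerSeries.coeff γ G • Eb b (H γ i))
              = ∑ i, ∑ γ ∈ DD, MvPowerSeries.coeff γ G • (φ i * Eb b (H γ i)) by
            refine Finset.sum_congr rfl fun i _ => ?_
            rw [Finset.mul_sum]
            exact Finset.sum_congr rfl fun γ _ => (mul_smul_comm _ _ _)]
          rw [Finset.sum_comm]
          exact Finset.sum_congr rfl fun γ _ => (Finset.smul_sum).symm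
        rw [swap]
        have hkey : ∀ γ ∈ DD, (MvPowerSeries.coeff γ G • ∑ i, φ i * Eb b (H γ i))
            = MvPowerSeries.coeff γ G • Eb b (∏ i, ψ i ^ γ i) := by
          intro γ hγ
          have hγ1 : γ ∉ Finset.Iic (cst n Nb) := by
            rw [hDDdef] at hγ
            exact (Finset.mem_sdiff.mp hγ).2
          rw [key γ (fun hle => hγ1 (Finset.mem_Iic.mpr hle))]
        rw [Finset.sum_congr rfl hkey]
        rw [show (∑ γ ∈ DD, MvPowerSeries.coeff γ G • Eb b (∏ i, ψ i ^ γ i))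
            = Eb b (∑ γ ∈ DD, MvPowerSeries.coeff γ G • ∏ i, ψ i ^ γ i) by
          rw [map_sum]
          exact Finset.sum_congr rfl fun γ _ => (map_smul (Eb b) _ _).symm]
        rw [← map_sub]
        congr 1
        have hsub : Finset.Iic (cst n Nb) ⊆ Finset.Iic (cst n (A + Nb + 1)) :=
          Finset.Iic_subset_Iic.mpr (cst_le_cst (by omega))
        have := Finset.sum_sdiff (f := fun γ => MvPowerSeries.coeff γ G • ∏ i, ψ i ^ γ i) hsub
        rw [hSdef]
        rw [hDDdef]
        linear_combination (norm := abel) this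
      have e3 : MvPowerSeries.coeff a (∑ i, φ i * W i)
          = - MvPowerSeries.coeff a (Eb b (S Nb)) := by
        rw [e2, map_sub]
        have hzero : MvPowerSeries.coeff a (Eb b (S (A + Nb + 1))) = 0 := by
          rw [coeff_Eb]
          have hstab2 : MvPowerSeries.coeff (jn a b) (S (A + Nb + 1))
              = MvPowerSeries.coeff (jn a b) (S (A + Nb)) :=
            stab (fun γ => MvPowerSeries.coeff γ G) ψ (ow m) hψow (jn a b)
              (cst n (A + Nb)) (cst n (A + Nb + 1))
              (fun i => by rw [sdeg_ow_jn, cst_apply, hAdef, hNbdef]) (cst_le_cst (by omega))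
          rw [hstab2]
          have hzz := hG' (jn a b)
          rw [sum_jn] at hzz
          rw [hAdef, hNbdef]
          exact hzz
        rw [hzero, zero_sub]
      have e4 : (∑ i, MvPowerSeries.coeff a (φ i * W i))
          = - MvPowerSeries.coeff a (Eb b (S Nb)) := by
        rw [← map_sum]
        exact e3
      conv_rhs => rw [map_neg, map_sum]
      simp only [e1]
      rw [e4, neg_neg]
    obtain ⟨c, hc⟩ := hwit
    rw [hc]
    apply neg_mem
    apply Ideal.sum_mem
    intro i _
    exact Ideal.mul_mem_right _ _ (Ideal.subset_span ⟨i, rfl⟩)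
  rw [stepA]
  have hsplit2 : Eb b (T Nb) = (Eb b (T Nb) - Eb b (S Nb)) + Eb b (S Nb) := by ring
  rw [hsplit2]
  exact J.add_mem stepB stepC
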